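/- Let Π be an edge-disjoint SIMUG covering of a directed graph with chosen roots τ₁, …, τ_n (one per SIMUG). Then for every vertex j, there exist |P_j| vertex-disjoint directed paths from the set {τ₁, …, τ_n} to the set P_j of parametrized in-neighbors of j. -/

import Mathlib

/-- The vertex set of a subgraph given by its edge set. -/
def verts {V : Type*} (T : Set (V × V)) : Set V :=
  {v | ∃ w, (v, w) ∈ T ∨ (w, v) ∈ T}

/-- Reachability by directed paths using edges of `T`. -/
def Reach {V : Type*} (T : Set (V × V)) : V → V → Prop :=
  Relation.ReflTransGen (fun a b => (a, b) ∈ T)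

/-- The set of parametrized in-neighbors of `j` within the subgraph `T`,
where `Ep` is the set of parametrized edges. -/
def Pset {V : Type*} (Ep T : Set (V × V)) (j : V) : Set V :=
  {i | (i, j) ∈ T ∧ (i, j) ∈ Ep}

/-- A single-source identifiable multi-rooted graph (SIMUG) with edge set `T`,
root set `R`, and parametrized edges `Ep`: it has at least two vertices, a
nonempty root set of vertices each of which reaches every vertex of `T`, and
every vertex has at most one incoming parametrized edge within `T`. -/
def IsSIMUG {V : Type*} (Ep T : Set (V × V)) (R : Set V) : Prop :=
  (verts T).Nontrivial ∧ R.Nonempty ∧ R ⊆ verts T ∧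
  (∀ r ∈ R, ∀ v ∈ verts T, Reach T r v) ∧
  (∀ j : V, (Pset Ep T j).Subsingleton)

/-- Edge-disjointness of two subgraphs: no common edges, and no vertex has
outgoing edges in both subgraphs. -/
def EdgeDisjoint {V : Type*} (T₁ T₂ : Set (V × V)) : Prop :=
  Disjoint T₁ T₂ ∧ ∀ j : V, (∃ w, (j, w) ∈ T₁) → (∃ w, (j, w) ∈ T₂) → False

/-- `A` is mergeable to `B` (with root set `RB` of `B`): the union graph is a
SIMUG, and every root of `B` has a directed path in the union to every vertex
of `A`. -/
def Mergeable {V : Type*} (Ep A B : Set (V × V)) (RB : Set V) : Prop :=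
  (∃ R : Set V, IsSIMUG Ep (A ∪ B) R) ∧
  ∀ r ∈ RB, ∀ v ∈ verts A, Reach (A ∪ B) r v

lemma reach_nodup_list {V : Type*} {r : V → V → Prop} {a b : V}
    (h : Relation.ReflTransGen r a b) :
    ∃ l : List V, l ≠ [] ∧ l.head? = some a ∧ l.getLast? = some b ∧
      l.Chain' r ∧ l.Nodup := by
  induction h with
  | refl => exact ⟨[a], by simp [List.Chain', List.isChain_singleton]⟩
  | tail h₁ h₂ ih =>
    rename_i b' c
    obtain ⟨l, hne, hhead, hlast, hchain, hnodup⟩ := ih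
    by_cases hc : c ∈ l
    · obtain ⟨s, t, rfl⟩ := List.append_of_mem hc
      have hpre : (s ++ [c]) <+: (s ++ c :: t) := ⟨t, by simp⟩
      refine ⟨s ++ [c], by simp, ?_, by simp, hchain.prefix hpre, ?_⟩
      · cases s with
        | nil => simpa using hhead
        | cons x s' => simpa using hhead
      · exact hnodup.sublist hpre.sublist
    · refine ⟨l ++ [c], by simp, ?_, by simp, ?_, ?_⟩
      · cases l with
        | nil => exact absurd rfl hne
        | cons x s' => simpa using hhead
      · rw [List.Chain', List.isChain_append]
        refine ⟨hchain, List.isChain_singleton c, fun x hx y hy => ?_⟩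
        rw [hlast] at hx
        simp only [List.head?_cons, Option.mem_def, Option.some.injEq] at hx hy
        subst hx; subst hy; exact h₂
      · simp [List.nodup_append, hnodup, hc]; exact fun a ha e => hc (e ▸ ha)

lemma exists_next {V : Type*} {r : V → V → Prop} :
    ∀ (l : List V) (b c : V), l.Chain' r → l.getLast? = some b → r b c →
      ∀ v ∈ l, ∃ w, r v w := by
  intro l
  induction l with
  | nil => intro b c _ h; simp at h
  | cons x s ih =>
    intro b c hchain hlast hbc v hv
    cases s with
    | nil =>
      simp only [List.getLast?_singleton, Option.some.injEq] at hlast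
      simp only [List.mem_singleton] at hv
      exact ⟨c, hv ▸ hlast ▸ hbc⟩
    | cons y t =>
      rcases List.mem_cons.mp hv with rfl | hv'
      · exact ⟨y, (List.isChain_cons_cons.mp hchain).1⟩
      · exact ih b c (List.isChain_cons_cons.mp hchain).2
          (by rw [← hlast]; simp [List.getLast?_cons_cons]) hbc v hv'

/-- for an edge-disjoint SIMUG covering `{T k}` of
`E_p ∪ E_f` with chosen roots `τ k`, and any vertex `j`, there exist
`|P_j|` vertex-disjoint directed paths from `{τ 1, …, τ n}` to the
parametrized in-neighbor set `P_j = {i | (i,j) ∈ E_p}`: one path ending at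
each element of `P_j`, starting at some `τ k`, and pairwise sharing no
vertices. -/
theorem stmt13 {V : Type*} (n : ℕ) (Ep Ef : Set (V × V))
    (T : Fin n → Set (V × V)) (R : Fin n → Set V)
    (hS : ∀ k, IsSIMUG Ep (T k) (R k))
    (hD : ∀ k l, k ≠ l → EdgeDisjoint (T k) (T l))
    (hcov : (⋃ k, T k) = Ep ∪ Ef)
    (τ : Fin n → V) (hτ : ∀ k, τ k ∈ R k) (j : V) :
    ∃ p : V → List V,
      (∀ i, (i, j) ∈ Ep →
        (p i ≠ [] ∧ (∀ h : p i ≠ [], (p i).head h ∈ Set.range τ ∧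
            (p i).getLast h = i) ∧
          (p i).Chain' (fun a b => (a, b) ∈ Ep ∪ Ef) ∧ (p i).Nodup)) ∧
      (∀ i₁ i₂, (i₁, j) ∈ Ep → (i₂, j) ∈ Ep → i₁ ≠ i₂ →
        ∀ v, v ∈ p i₁ → v ∉ p i₂) := by
  classical
  have hk : ∀ i, (i, j) ∈ Ep → ∃ k, (i, j) ∈ T k := by
    intro i hi
    have : (i, j) ∈ ⋃ k, T k := by rw [hcov]; exact Or.inl hi
    exact Set.mem_iUnion.mp this
  choose k hkmem using hk
  have hpath : ∀ i (hi : (i, j) ∈ Ep), ∃ l : List V, l ≠ [] ∧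
      l.head? = some (τ (k i hi)) ∧ l.getLast? = some i ∧
      l.Chain' (fun a b => (a, b) ∈ T (k i hi)) ∧ l.Nodup := by
    intro i hi
    have hiv : i ∈ verts (T (k i hi)) := ⟨j, Or.inl (hkmem i hi)⟩
    have hreach : Reach (T (k i hi)) (τ (k i hi)) i :=
      (hS (k i hi)).2.2.2.1 _ (hτ _) i hiv
    exact reach_nodup_list hreach
  choose L hL1 hL2 hL3 hL4 hL5 using hpath
  refine ⟨fun i => if h : (i, j) ∈ Ep then L i h else [], ?_, ?_⟩
  · intro i hi
    simp only [dif_pos hi]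
    refine ⟨hL1 i hi, fun h => ⟨⟨k i hi, ?_⟩, ?_⟩, ?_, hL5 i hi⟩
    · have := hL2 i hi
      rw [List.head?_eq_head h] at this
      exact (Option.some.injEq _ _ ▸ this).symm
    · have := hL3 i hi
      rw [List.getLast?_eq_getLast h] at this
      exact Option.some.injEq _ _ ▸ this
    · refine (hL4 i hi).imp (fun a b hab => ?_)
      have : (a, b) ∈ ⋃ k, T k := Set.mem_iUnion.mpr ⟨_, hab⟩
      rwa [hcov] at this
  · intro i₁ i₂ h₁ h₂ hne v hv₁ hv₂
    simp only [dif_pos h₁] at hv₁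
    simp only [dif_pos h₂] at hv₂
    have hkk : k i₁ h₁ ≠ k i₂ h₂ := by
      intro e
      apply hne
      refine (hS (k i₁ h₁)).2.2.2.2 j ⟨hkmem i₁ h₁, h₁⟩ ⟨?_, h₂⟩
      rw [e]; exact hkmem i₂ h₂
    have out₁ : ∃ w, (v, w) ∈ T (k i₁ h₁) :=
      exists_next (L i₁ h₁) i₁ j (hL4 i₁ h₁) (hL3 i₁ h₁) (hkmem i₁ h₁) v hv₁
    have out₂ : ∃ w, (v, w) ∈ T (k i₂ h₂) :=
      exists_next (L i₂ h₂) i₂ j (hL4 i₂ h₂) (hL3 i₂ h₂) (hkmem i₂ h₂) v hv₂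
    exact (hD _ _ hkk).2 v out₁ out₂
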